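/- Let n ≥ 3 and let k be an integer with 2 ≤ k ≤ n-2. Let Q₁ be the quotient topological space of (S^k × D^{n-1-k}) × [0,1] by the equivalence relation generated by ((z,y),t) ~ ((z,y),t') for all z ∈ S^k, y ∈ D^{n-1-k} with ‖y‖ = 1, t,t' ∈ [0,1], and ((z,x),1) ~ ((z,x),0) for all (z,x) ∈ S^k × D^{n-1-k}. Let Q₂ be the quotient topological space of (S^{n-k} × D^{k-1}) × [0,1] by the equivalence relation generated by ((w,y),t) ~ ((w,y),t') for all w ∈ S^{n-k}, y ∈ D^{k-1} with ‖y‖ = 1, t,t' ∈ [0,1], and ((w,x),1) ~ ((w,x),0) for all (w,x) ∈ S^{n-k} × D^{k-1}. Then Q₁ is homeomorphic to Q₂. -/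

import Mathlib

open Metric unitInterval

noncomputable section

/-- The closed unit ball (disk) in `EuclideanSpace ℝ (Fin m)`. -/
def Disk (m : ℕ) : Set (EuclideanSpace ℝ (Fin m)) := Metric.closedBall 0 1

/-- The unit sphere of dimension `m` in `EuclideanSpace ℝ (Fin (m+1))`. -/
def Sph (m : ℕ) : Set (EuclideanSpace ℝ (Fin (m + 1))) := Metric.sphere 0 1

/-- The relation generating the open book quotient on the page `S^k × D^m` with trivial
monodromy: `((z,y),t) ~ ((z,y),t')` for `‖y‖ = 1` and `((z,x),1) ~ ((z,x),0)`. -/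
def obRelSD (k m : ℕ) (p q : (↥(Sph k) × ↥(Disk m)) × I) : Prop :=
  (p.1 = q.1 ∧ ‖(p.1.2 : EuclideanSpace ℝ (Fin m))‖ = 1) ∨
  (p.1 = q.1 ∧ p.2 = 1 ∧ q.2 = 0)

namespace OBAux

open Real

/-- Angle parametrization of the circle by `[0,1]`, landing in `[-π, π]`. -/
def ang (t : ℝ) : ℝ := (2 * t - 1) * π

/-- The basic map `D^m × ℝ → ℝ^{m+2}` realizing the quotient of `D^m × [0,1]` as `S^{m+1}`. -/
def gmap (m : ℕ) (y : EuclideanSpace ℝ (Fin m)) (t : ℝ) : EuclideanSpace ℝ (Fin (m + 2)) :=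
  WithLp.toLp 2 (Fin.snoc (Fin.snoc (y : Fin m → ℝ) (Real.sqrt (1 - ‖y‖ ^ 2) * Real.cos (ang t)))
    (Real.sqrt (1 - ‖y‖ ^ 2) * Real.sin (ang t)) : Fin (m + 2) → ℝ)

lemma gmap_apply_y (m : ℕ) (y : EuclideanSpace ℝ (Fin m)) (t : ℝ) (i : Fin m) :
    gmap m y t (i.castSucc.castSucc) = y i := by
  simp [gmap, Fin.snoc_castSucc]

lemma gmap_apply_cos (m : ℕ) (y : EuclideanSpace ℝ (Fin m)) (t : ℝ) :
    gmap m y t ((Fin.last m).castSucc) = Real.sqrt (1 - ‖y‖ ^ 2) * Real.cos (ang t) := by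
  simp [gmap, Fin.snoc_castSucc, Fin.snoc_last]

lemma gmap_apply_sin (m : ℕ) (y : EuclideanSpace ℝ (Fin m)) (t : ℝ) :
    gmap m y t (Fin.last (m + 1)) = Real.sqrt (1 - ‖y‖ ^ 2) * Real.sin (ang t) := by
  simp [gmap, Fin.snoc_last]

lemma sum_sq_y (m : ℕ) (y : EuclideanSpace ℝ (Fin m)) :
    ∑ i : Fin m, (y i) ^ 2 = ‖y‖ ^ 2 := by
  rw [EuclideanSpace.norm_eq, Real.sq_sqrt (by positivity)]
  simp [Real.norm_eq_abs, sq_abs]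

lemma gmap_sum_sq (m : ℕ) (y : EuclideanSpace ℝ (Fin m)) (t : ℝ) :
    ∑ j : Fin (m + 2), (gmap m y t j) ^ 2 =
      ‖y‖ ^ 2 + (Real.sqrt (1 - ‖y‖ ^ 2)) ^ 2 *
        ((Real.cos (ang t)) ^ 2 + (Real.sin (ang t)) ^ 2) := by
  rw [Fin.sum_univ_castSucc, Fin.sum_univ_castSucc]
  simp only [gmap, Fin.snoc_castSucc, Fin.snoc_last]
  rw [sum_sq_y]
  ring

lemma gmap_mem (m : ℕ) (y : EuclideanSpace ℝ (Fin m)) (t : ℝ) (h : ‖y‖ ≤ 1) :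
    gmap m y t ∈ Sph (m + 1) := by
  have h0 : (0 : ℝ) ≤ 1 - ‖y‖ ^ 2 := by nlinarith [norm_nonneg y]
  have : (Sph (m + 1) : Set (EuclideanSpace ℝ (Fin (m + 2)))) = Metric.sphere 0 1 := rfl
  rw [this, mem_sphere_zero_iff_norm, EuclideanSpace.norm_eq]
  have hconv : ∑ j : Fin (m + 2), ‖gmap m y t j‖ ^ 2
      = ∑ j : Fin (m + 2), (gmap m y t j) ^ 2 := by
    simp [Real.norm_eq_abs, sq_abs]
  rw [hconv, gmap_sum_sq, Real.sq_sqrt h0]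
  have : ‖y‖ ^ 2 + (1 - ‖y‖ ^ 2) *
      ((Real.cos (ang t)) ^ 2 + (Real.sin (ang t)) ^ 2) = 1 := by
    have := Real.sin_sq_add_cos_sq (ang t)
    nlinarith
  rw [this, Real.sqrt_one]

lemma cos_sin_inj {t t' : ℝ} (ht0 : 0 ≤ t) (ht1 : t ≤ 1) (ht0' : 0 ≤ t') (ht1' : t' ≤ 1)
    (hc : Real.cos (ang t) = Real.cos (ang t')) (hs : Real.sin (ang t) = Real.sin (ang t')) :
    t = t' ∨ (t = 1 ∧ t' = 0) ∨ (t = 0 ∧ t' = 1) := by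
  have hexp : Complex.exp ((ang t : ℂ) * Complex.I) = Complex.exp ((ang t' : ℂ) * Complex.I) := by
    rw [Complex.exp_mul_I, Complex.exp_mul_I, ← Complex.ofReal_cos, ← Complex.ofReal_cos,
      ← Complex.ofReal_sin, ← Complex.ofReal_sin, hc, hs]
  obtain ⟨n, hn⟩ := Complex.exp_eq_exp_iff_exists_int.mp hexp
  have h3 : (ang t : ℂ) * Complex.I = ((ang t' : ℝ) + (n : ℝ) * (2 * π) : ℝ) * Complex.I := by
    rw [hn]; push_cast; ring
  have h4 := mul_right_cancel₀ Complex.I_ne_zero h3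
  have hre : ang t = ang t' + (n : ℝ) * (2 * π) := by exact_mod_cast h4
  have hπ := Real.pi_pos
  have hne : t = t' + (n : ℝ) := by
    have h5 : (2 * t - 1) * π = (2 * t' - 1) * π + (n : ℝ) * (2 * π) := hre
    nlinarith
  have hb1 : (-1 : ℤ) ≤ n := by
    have : (-1 : ℝ) ≤ (n : ℝ) := by linarith
    exact_mod_cast this
  have hb2 : n ≤ 1 := by
    have : (n : ℝ) ≤ 1 := by linarith
    exact_mod_cast this
  interval_cases n
  · push_cast at hne
    right; right; constructor <;> linarith
  · push_cast at hne
    left; linarith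
  · push_cast at hne
    right; left; constructor <;> linarith

lemma gmap_inj {m : ℕ} {y y' : EuclideanSpace ℝ (Fin m)} {t t' : ℝ}
    (hy : ‖y‖ ≤ 1) (ht0 : 0 ≤ t) (ht1 : t ≤ 1) (ht0' : 0 ≤ t') (ht1' : t' ≤ 1)
    (heq : gmap m y t = gmap m y' t') :
    y = y' ∧ (‖y‖ = 1 ∨ t = t' ∨ (t = 1 ∧ t' = 0) ∨ (t = 0 ∧ t' = 1)) := by
  have happ : ∀ j, gmap m y t j = gmap m y' t' j := fun j => by rw [heq]
  have hyy : y = y' := by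
    ext i
    have := happ (i.castSucc.castSucc)
    rwa [gmap_apply_y, gmap_apply_y] at this
  subst hyy
  refine ⟨rfl, ?_⟩
  by_cases h1 : ‖y‖ = 1
  · exact Or.inl h1
  · have hlt : ‖y‖ < 1 := lt_of_le_of_ne hy h1
    have hrpos : 0 < Real.sqrt (1 - ‖y‖ ^ 2) := by
      apply Real.sqrt_pos.mpr
      nlinarith [norm_nonneg y]
    have hc := happ ((Fin.last m).castSucc)
    rw [gmap_apply_cos, gmap_apply_cos] at hc
    have hs := happ (Fin.last (m + 1))
    rw [gmap_apply_sin, gmap_apply_sin] at hs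
    have hc' := mul_left_cancel₀ (ne_of_gt hrpos) hc
    have hs' := mul_left_cancel₀ (ne_of_gt hrpos) hs
    exact Or.inr (cos_sin_inj ht0 ht1 ht0' ht1' hc' hs')

lemma gmap_surj (m : ℕ) (v : EuclideanSpace ℝ (Fin (m + 2))) (hv : ‖v‖ = 1) :
    ∃ (y : EuclideanSpace ℝ (Fin m)) (t : ℝ),
      ‖y‖ ≤ 1 ∧ 0 ≤ t ∧ t ≤ 1 ∧ gmap m y t = v := by
  set y : EuclideanSpace ℝ (Fin m) := WithLp.toLp 2 (fun i : Fin m => v (i.castSucc.castSucc)) with hydef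
  set a : ℝ := v ((Fin.last m).castSucc) with hadef
  set b : ℝ := v (Fin.last (m + 1)) with hbdef
  have hsum : (∑ i : Fin m, (y i) ^ 2) + a ^ 2 + b ^ 2 = 1 := by
    have h1 : ‖v‖ ^ 2 = 1 := by rw [hv]; norm_num
    rw [EuclideanSpace.norm_eq, Real.sq_sqrt (by positivity)] at h1
    have h2 : ∑ j : Fin (m + 2), ‖v j‖ ^ 2 = ∑ j : Fin (m + 2), (v j) ^ 2 := by
      simp [Real.norm_eq_abs, sq_abs]
    rw [h2, Fin.sum_univ_castSucc, Fin.sum_univ_castSucc] at h1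
    rw [hydef, hadef, hbdef]
    linarith
  have hny : ‖y‖ ^ 2 = 1 - a ^ 2 - b ^ 2 := by
    rw [← sum_sq_y]; linarith
  have hy1 : ‖y‖ ≤ 1 := by nlinarith [norm_nonneg y, sq_nonneg a, sq_nonneg b]
  have hr : Real.sqrt (1 - ‖y‖ ^ 2) = Real.sqrt (a ^ 2 + b ^ 2) := by
    congr 1; linarith
  set z : ℂ := ⟨a, b⟩ with hzdef
  have habs : ‖z‖ = Real.sqrt (a ^ 2 + b ^ 2) := by
    rw [Complex.norm_def, hzdef, Complex.normSq_mk]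
    ring_nf
  by_cases hz : z = 0
  · have ha : a = 0 := by rw [hzdef] at hz; exact congrArg Complex.re hz
    have hb : b = 0 := by rw [hzdef] at hz; exact congrArg Complex.im hz
    have hr0 : Real.sqrt (1 - ‖y‖ ^ 2) = 0 := by
      rw [hr, ha, hb]; norm_num
    refine ⟨y, 0, hy1, le_refl 0, zero_le_one, ?_⟩
    ext j
    induction j using Fin.lastCases with
    | last => rw [gmap_apply_sin, hr0, zero_mul, ← hbdef, hb]
    | cast i =>
      induction i using Fin.lastCases with
      | last => rw [gmap_apply_cos, hr0, zero_mul, ← hadef, ha]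
      | cast i' => rw [gmap_apply_y]
  · set t : ℝ := (Complex.arg z + π) / (2 * π) with htdef
    have hπ := Real.pi_pos
    have harg := Complex.arg_mem_Ioc z
    have ht0 : 0 ≤ t := by
      rw [htdef]
      apply div_nonneg _ (by linarith)
      have := harg.1; linarith
    have ht1 : t ≤ 1 := by
      rw [htdef]
      rw [div_le_one (by linarith)]
      have := harg.2; linarith
    have hang : ang t = Complex.arg z := by
      rw [ang, htdef]
      field_simp
      ring
    have habsne : ‖z‖ ≠ 0 := by
      simpa using hz
    refine ⟨y, t, hy1, ht0, ht1, ?_⟩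
    ext j
    induction j using Fin.lastCases with
    | last =>
      rw [gmap_apply_sin, hr, hang, Complex.sin_arg, ← habs]
      field_simp
      rfl
    | cast i =>
      induction i using Fin.lastCases with
      | last =>
        rw [gmap_apply_cos, hr, hang, Complex.cos_arg hz, ← habs]
        field_simp
        rfl
      | cast i' => rw [gmap_apply_y]

lemma gmap_of_norm_one {m : ℕ} {y : EuclideanSpace ℝ (Fin m)} (h : ‖y‖ = 1) (t t' : ℝ) :
    gmap m y t = gmap m y t' := by
  unfold gmap
  rw [h]
  norm_num

lemma gmap_one_zero (m : ℕ) (y : EuclideanSpace ℝ (Fin m)) :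
    gmap m y 1 = gmap m y 0 := by
  have h1 : ang 1 = π := by unfold ang; ring
  have h0 : ang 0 = -π := by unfold ang; ring
  unfold gmap
  rw [h1, h0, Real.cos_neg, Real.sin_neg, Real.sin_pi]
  norm_num

lemma norm_disk {m : ℕ} (y : ↥(Disk m)) : ‖(y : EuclideanSpace ℝ (Fin m))‖ ≤ 1 := by
  have h : (y : EuclideanSpace ℝ (Fin m)) ∈ Metric.closedBall (0 : EuclideanSpace ℝ (Fin m)) 1 :=
    y.2
  rwa [Metric.mem_closedBall, dist_zero_right] at h

/-- The map inducing the homeomorphism from the open book quotient. -/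
def bigF (k m : ℕ) (p : (↥(Sph k) × ↥(Disk m)) × I) : ↥(Sph k) × ↥(Sph (m + 1)) :=
  (p.1.1, ⟨gmap m (p.1.2 : EuclideanSpace ℝ (Fin m)) (p.2 : ℝ),
    gmap_mem m _ _ (norm_disk p.1.2)⟩)

lemma bigF_resp (k m : ℕ) (p q : (↥(Sph k) × ↥(Disk m)) × I) (h : obRelSD k m p q) :
    bigF k m p = bigF k m q := by
  obtain ⟨⟨z, y⟩, t⟩ := p
  obtain ⟨⟨z', y'⟩, t'⟩ := q
  rcases h with ⟨h1, h2⟩ | ⟨h1, h2, h3⟩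
  · have hz : z = z' := congrArg Prod.fst h1
    have hy : y = y' := congrArg Prod.snd h1
    subst hz; subst hy
    exact Prod.ext rfl (Subtype.ext (gmap_of_norm_one h2 _ _))
  · have hz : z = z' := congrArg Prod.fst h1
    have hy : y = y' := congrArg Prod.snd h1
    subst hz; subst hy; subst h2; subst h3
    exact Prod.ext rfl (Subtype.ext (gmap_one_zero m _))

lemma bigF_surj (k m : ℕ) : Function.Surjective (bigF k m) := by
  rintro ⟨z, s⟩
  obtain ⟨y, t, hy, ht0, ht1, hg⟩ := gmap_surj m (s : EuclideanSpace ℝ (Fin (m + 2)))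
    (mem_sphere_zero_iff_norm.mp s.2)
  refine ⟨((z, ⟨y, ?_⟩), ⟨t, ht0, ht1⟩), ?_⟩
  · show y ∈ Metric.closedBall (0 : EuclideanSpace ℝ (Fin m)) 1
    rw [Metric.mem_closedBall, dist_zero_right]; exact hy
  · exact Prod.ext rfl (Subtype.ext hg)

lemma bigF_eqvGen {k m : ℕ} {p q : (↥(Sph k) × ↥(Disk m)) × I}
    (h : bigF k m p = bigF k m q) : Relation.EqvGen (obRelSD k m) p q := by
  obtain ⟨⟨z, y⟩, t⟩ := p
  obtain ⟨⟨z', y'⟩, t'⟩ := q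
  have hz : z = z' := congrArg Prod.fst h
  have hg : gmap m (y : EuclideanSpace ℝ (Fin m)) (t : ℝ)
      = gmap m (y' : EuclideanSpace ℝ (Fin m)) (t' : ℝ) :=
    congrArg (fun x => ((x.2 : ↥(Sph (m + 1))) : EuclideanSpace ℝ (Fin (m + 2)))) h
  obtain ⟨hyy, hcase⟩ := gmap_inj (norm_disk y) t.2.1 t.2.2 t'.2.1 t'.2.2 hg
  have hy : y = y' := Subtype.ext hyy
  subst hz; subst hy
  rcases hcase with h1 | h2 | ⟨h3, h3'⟩ | ⟨h4, h4'⟩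
  · exact Relation.EqvGen.rel _ _ (Or.inl ⟨rfl, h1⟩)
  · have : t = t' := Subtype.ext h2
    subst this
    exact Relation.EqvGen.refl _
  · have e1 : t = 1 := Subtype.ext h3
    have e0 : t' = 0 := Subtype.ext h3'
    exact Relation.EqvGen.rel _ _ (Or.inr ⟨rfl, e1, e0⟩)
  · have e0 : t = 0 := Subtype.ext h4
    have e1 : t' = 1 := Subtype.ext h4'
    exact Relation.EqvGen.symm _ _ (Relation.EqvGen.rel _ _ (Or.inr ⟨rfl, e1, e0⟩))

lemma bigF_continuous (k m : ℕ) : Continuous (bigF k m) := by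
  apply Continuous.prodMk
  · exact continuous_fst.comp continuous_fst
  · apply Continuous.subtype_mk
    have hy : Continuous (fun p : (↥(Sph k) × ↥(Disk m)) × I =>
        (p.1.2 : EuclideanSpace ℝ (Fin m))) :=
      continuous_subtype_val.comp (continuous_snd.comp continuous_fst)
    have ht : Continuous (fun p : (↥(Sph k) × ↥(Disk m)) × I => (p.2 : ℝ)) :=
      continuous_subtype_val.comp continuous_snd
    have hr : Continuous (fun p : (↥(Sph k) × ↥(Disk m)) × I =>
        Real.sqrt (1 - ‖(p.1.2 : EuclideanSpace ℝ (Fin m))‖ ^ 2)) :=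
      Real.continuous_sqrt.comp (continuous_const.sub ((hy.norm).pow 2))
    have hang : Continuous (fun p : (↥(Sph k) × ↥(Disk m)) × I => ang (p.2 : ℝ)) := by
      unfold ang
      exact ((continuous_const.mul ht).sub continuous_const).mul continuous_const
    have hpi : Continuous (fun p : (↥(Sph k) × ↥(Disk m)) × I =>
        (fun j : Fin (m + 2) =>
          gmap m (p.1.2 : EuclideanSpace ℝ (Fin m)) (p.2 : ℝ) j)) := by
      apply continuous_pi
      intro j
      induction j using Fin.lastCases with
      | last =>
        simp only [gmap_apply_sin]
        exact hr.mul (Real.continuous_sin.comp hang)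
      | cast i =>
        induction i using Fin.lastCases with
        | last =>
          simp only [gmap_apply_cos]
          exact hr.mul (Real.continuous_cos.comp hang)
        | cast i' =>
          simp only [gmap_apply_y]
          exact (continuous_apply i').comp
            ((PiLp.continuous_ofLp 2 (fun _ : Fin m => ℝ)).comp hy)
    exact (PiLp.continuous_toLp 2 (fun _ : Fin (m + 2) => ℝ)).comp hpi

instance instCompactSph (k : ℕ) : CompactSpace ↥(Sph k) :=
  isCompact_iff_compactSpace.mp (isCompact_sphere (0 : EuclideanSpace ℝ (Fin (k + 1))) 1)

instance instCompactDisk (m : ℕ) : CompactSpace ↥(Disk m) :=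
  isCompact_iff_compactSpace.mp (isCompact_closedBall (0 : EuclideanSpace ℝ (Fin m)) 1)

instance instCompactQuot {α : Type*} [TopologicalSpace α] [CompactSpace α]
    (r : α → α → Prop) : CompactSpace (Quot r) :=
  ⟨by rw [← Set.range_quot_mk r]; exact isCompact_range continuous_quot_mk⟩

lemma key (k m : ℕ) :
    Nonempty (Quot (obRelSD k m) ≃ₜ ↥(Sph k) × ↥(Sph (m + 1))) := by
  let f : Quot (obRelSD k m) → ↥(Sph k) × ↥(Sph (m + 1)) :=
    Quot.lift (bigF k m) (bigF_resp k m)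
  have hinj : Function.Injective f := by
    intro a b
    induction a using Quot.ind with
    | _ p =>
      induction b using Quot.ind with
      | _ q =>
        intro h
        exact Quot.eqvGen_sound (bigF_eqvGen h)
  have hsurj : Function.Surjective f := by
    intro s
    obtain ⟨p, hp⟩ := bigF_surj k m s
    exact ⟨Quot.mk _ p, hp⟩
  have hcont : Continuous f := continuous_quot_lift _ (bigF_continuous k m)
  exact ⟨Continuous.homeoOfEquivCompactToT2
    (f := Equiv.ofBijective f ⟨hinj, hsurj⟩) hcont⟩

end OBAux

/-- Page exchange: `Ob(S^k × D^{n-1-k}, id)` and `Ob(S^{n-k} × D^{k-1}, id)` are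
homeomorphic. -/
theorem openBook_page_exchange (n k : ℕ) (hn : 3 ≤ n) (hk1 : 2 ≤ k) (hk2 : k ≤ n - 2) :
    Nonempty (Quot (obRelSD k (n - 1 - k)) ≃ₜ Quot (obRelSD (n - k) (k - 1))) := by
  obtain ⟨e₁⟩ := OBAux.key k (n - 1 - k)
  obtain ⟨e₂⟩ := OBAux.key (n - k) (k - 1)
  have h1 : n - 1 - k + 1 = n - k := by omega
  have h2 : k - 1 + 1 = k := by omega
  rw [h1] at e₁
  rw [h2] at e₂
  exact ⟨e₁.trans ((Homeomorph.prodComm _ _).trans e₂.symm)⟩
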